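/- For a d-dimensional copula C with CCTE ξ_α(C) and cumulative copula entropy ξ(C) = -∫_{[0,1]^d} C(u)log(C(u)) du, one has ξ_α(C) ≥ ξ(C) if α ∈ (0,1) and ξ_α(C) ≤ ξ(C) if α ∈ (1,∞). -/
import Mathlib


open MeasureTheory

/-- The unit cube [0,1]^d. -/
def unitCube (d : ℕ) : Set (Fin d → ℝ) :=
  Set.univ.pi (fun _ : Fin d => Set.Icc (0:ℝ) 1)

/-- `C` is a d-dimensional copula: it is the joint CDF of a probability measure
concentrated on [0,1]^d with uniform marginals. -/
def IsCopula {d : ℕ} (C : (Fin d → ℝ) → ℝ) : Prop :=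
  ∃ μ : Measure (Fin d → ℝ), IsProbabilityMeasure μ ∧
    μ (unitCube d) = 1 ∧
    (∀ i : Fin d, ∀ t ∈ Set.Icc (0:ℝ) 1, (μ {x | x i ≤ t}).toReal = t) ∧
    (∀ u, C u = (μ {x | ∀ i, x i ≤ u i}).toReal)

/-- Cumulative copula Tsallis entropy ξ_α(C) = (1/(α-1)) ∫_{[0,1]^d} (C(u) - C(u)^α) du. -/
noncomputable def ccte {d : ℕ} (α : ℝ) (C : (Fin d → ℝ) → ℝ) : ℝ :=
  (α - 1)⁻¹ * ∫ u in unitCube d, (C u - C u ^ α)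

/-- Cumulative copula (Shannon) entropy ξ(C) = -∫ C(u) log C(u) du. -/
noncomputable def cce {d : ℕ} (C : (Fin d → ℝ) → ℝ) : ℝ :=
  -∫ u in unitCube d, C u * Real.log (C u)

/-- Pointwise key inequality: `r^α ≥ r + (α-1)·r·log r` for `r ≥ 0`, `α > 0`. -/
lemma key_pointwise {α r : ℝ} (hα : 0 < α) (hr : 0 ≤ r) :
    r - r ^ α ≤ (α - 1) * (-(r * Real.log r)) := by
  rcases hr.eq_or_lt with h | h
  · simp [← h, Real.zero_rpow hα.ne']
  · have h1 : r ^ α = r * Real.exp ((α - 1) * Real.log r) := by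
      have h3 : r * Real.exp ((α - 1) * Real.log r)
          = Real.exp (Real.log r + (α - 1) * Real.log r) := by
        rw [Real.exp_add, Real.exp_log h]
      rw [h3, Real.rpow_def_of_pos h]
      congr 1
      ring
    have h2 : (α - 1) * Real.log r + 1 ≤ Real.exp ((α - 1) * Real.log r) :=
      Real.add_one_le_exp _
    nlinarith [mul_le_mul_of_nonneg_left h2 h.le]

theorem integral_key {d : ℕ} (C : (Fin d → ℝ) → ℝ) (hC : IsCopula C) {α : ℝ}
    (hα : 0 < α) :
    ∫ u in unitCube d, (C u - C u ^ α) ≤ (α - 1) * cce C := by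
  obtain ⟨μ, hprob, -, -, hCdef⟩ := hC
  -- measurability of C
  have hs : MeasurableSet {p : (Fin d → ℝ) × (Fin d → ℝ) | ∀ i, p.2 i ≤ p.1 i} := by
    have : {p : (Fin d → ℝ) × (Fin d → ℝ) | ∀ i, p.2 i ≤ p.1 i}
        = ⋂ i, {p | p.2 i ≤ p.1 i} := by
      ext p; simp
    rw [this]
    refine MeasurableSet.iInter fun i => measurableSet_le ?_ ?_
    · exact (measurable_pi_apply i).comp measurable_snd
    · exact (measurable_pi_apply i).comp measurable_fst
  have hmeas : Measurable C := by
    have h1 : Measurable fun u : Fin d → ℝ =>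
        μ (Prod.mk u ⁻¹' {p : (Fin d → ℝ) × (Fin d → ℝ) | ∀ i, p.2 i ≤ p.1 i}) :=
      measurable_measure_prodMk_left hs
    have : C = fun u => (μ (Prod.mk u ⁻¹' {p : (Fin d → ℝ) × (Fin d → ℝ) |
        ∀ i, p.2 i ≤ p.1 i})).toReal := by
      funext u
      rw [hCdef u]
      rfl
    rw [this]
    exact h1.ennreal_toReal
  -- bounds on C
  have hC0 : ∀ u, 0 ≤ C u := fun u => (hCdef u) ▸ ENNReal.toReal_nonneg
  have hC1 : ∀ u, C u ≤ 1 := by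
    intro u
    rw [hCdef u]
    have h1 : μ {x | ∀ i, x i ≤ u i} ≤ 1 := prob_le_one
    calc (μ {x | ∀ i, x i ≤ u i}).toReal ≤ (1 : ENNReal).toReal :=
          ENNReal.toReal_mono ENNReal.one_ne_top h1
      _ = 1 := by simp
  -- finite measure on the cube
  have hcubeMeas : MeasurableSet (unitCube d) :=
    MeasurableSet.univ_pi fun i => measurableSet_Icc
  have hvol : volume (unitCube d) = 1 := by
    rw [unitCube, volume_pi_pi]
    simp [Real.volume_Icc]
  haveI : IsFiniteMeasure (volume.restrict (unitCube d)) := by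
    constructor
    rw [Measure.restrict_apply_univ, hvol]
    exact ENNReal.one_lt_top
  -- integrability
  have hintf : IntegrableOn (fun u => C u - C u ^ α) (unitCube d) volume := by
    refine Integrable.mono' (integrable_const 2)
      ((hmeas.sub ((Real.continuous_rpow_const hα.le).measurable.comp hmeas)).aestronglyMeasurable) ?_
    filter_upwards with u
    have h1 : 0 ≤ C u ^ α := Real.rpow_nonneg (hC0 u) α
    have h2 : C u ^ α ≤ 1 := Real.rpow_le_one (hC0 u) (hC1 u) hα.le
    rw [Real.norm_eq_abs, abs_le]
    constructor <;> nlinarith [hC0 u, hC1 u]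
  have hintg : IntegrableOn (fun u => C u * Real.log (C u)) (unitCube d) volume := by
    refine Integrable.mono' (integrable_const 1)
      ((hmeas.mul (Real.measurable_log.comp hmeas)).aestronglyMeasurable) ?_
    filter_upwards with u
    rw [Real.norm_eq_abs]
    rcases (hC0 u).eq_or_lt with h | h
    · simp [← h]
    · rw [mul_comm]
      exact (Real.abs_log_mul_self_lt (C u) h (hC1 u)).le
  -- pointwise comparison and conclusion
  have hle : ∫ u in unitCube d, (C u - C u ^ α)
      ≤ ∫ u in unitCube d, (α - 1) * (-(C u * Real.log (C u))) := by
    refine setIntegral_mono_on hintf ?_ hcubeMeas ?_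
    · exact ((hintg.neg).const_mul _)
    · intro u _
      exact key_pointwise hα (hC0 u)
  calc ∫ u in unitCube d, (C u - C u ^ α)
      ≤ ∫ u in unitCube d, (α - 1) * (-(C u * Real.log (C u))) := hle
    _ = (α - 1) * cce C := by
        rw [MeasureTheory.integral_const_mul, cce, integral_neg]

/-- ξ_α(C) ≥ ξ(C) for α ∈ (0,1) and ξ_α(C) ≤ ξ(C) for α ∈ (1,∞). -/
theorem ccte_vs_cce {d : ℕ} (C : (Fin d → ℝ) → ℝ) (hC : IsCopula C) (α : ℝ) :
    (α ∈ Set.Ioo (0:ℝ) 1 → cce C ≤ ccte α C) ∧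
      (α ∈ Set.Ioi (1:ℝ) → ccte α C ≤ cce C) := by
  constructor
  · rintro ⟨hα0, hα1⟩
    have hkey := integral_key C hC hα0
    have hne : α - 1 ≠ 0 := by linarith
    have hneg : (α - 1)⁻¹ ≤ 0 := by
      apply inv_nonpos.2; linarith
    have := mul_le_mul_of_nonpos_left hkey hneg
    rw [← mul_assoc, inv_mul_cancel₀ hne, one_mul] at this
    rw [ccte]
    exact this
  · intro hα
    have hα0 : 0 < α := lt_trans one_pos hα
    have hkey := integral_key C hC hα0
    have hne : α - 1 ≠ 0 := by
      have : (1:ℝ) < α := hα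
      intro h; linarith
    have hpos : 0 ≤ (α - 1)⁻¹ := by
      apply inv_nonneg.2
      have : (1:ℝ) < α := hα
      linarith
    have := mul_le_mul_of_nonneg_left hkey hpos
    rw [← mul_assoc, inv_mul_cancel₀ hne, one_mul] at this
    rw [ccte]
    exact this
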